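/- Let (Ω, 𝓕, P) be a probability space and (X_s)_{s∈ℝ} a family of real-valued square-integrable random variables. Let t ∈ ℝ, H > 0, C > 0, and suppose there is a sequence (s_i) with s_i ≠ t, s_i → t, and E[(X_t − X_{s_i})²] ≤ C|t − s_i|^{2H} for all i. Then for every n ≥ 1, every ε ∈ (0, 2H), every c > 0 and every r > 0, there exist points t_1, …, t_n ∈ B(t,r) \ {t} such that E[(X_t − E[X_t | σ(X_{t_1}, …, X_{t_n})])²] ≤ c · min_{1≤k≤n} |t − t_k|^{2H−ε}. (Consequently, the local nondeterminism lower bound Var(X_t | X_{t_1}, …, X_{t_n}) ≥ c_n min_k |t − t_k|^{2H−ε} fails for every exponent 2H − ε < 2H.) -/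

import Mathlib

open Filter MeasureTheory Set Topology
open scoped ENNReal NNReal

private lemma l2_int_sq {Ω : Type*} [MeasurableSpace Ω] (P : MeasureTheory.Measure Ω)
    (g : MeasureTheory.Lp ℝ 2 P) : ∫ ω, (g ω) ^ 2 ∂P = ‖g‖ ^ 2 := by
  rw [← real_inner_self_eq_norm_sq, MeasureTheory.L2.inner_def]
  simp [RCLike.inner_apply, sq]

/-- The conditional expectation is the best L² approximation: for any `m`-strongly measurable
`g` in L², `E[(f - E[f|m])²] ≤ E[(f - g)²]`. -/
private lemma condexp_L2_min {Ω : Type*} {m mΩ : MeasurableSpace Ω} (hm : m ≤ mΩ)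
    (P : MeasureTheory.Measure Ω) [IsProbabilityMeasure P] {f g : Ω → ℝ}
    (hf : MemLp f 2 P) (hg : MemLp g 2 P) (hgm : StronglyMeasurable[m] g) :
    (∫ ω, (f ω - (P[f | m]) ω) ^ 2 ∂P) ≤ ∫ ω, (f ω - g ω) ^ 2 ∂P := by
  haveI : Fact (m ≤ mΩ) := ⟨hm⟩
  set F : MeasureTheory.Lp ℝ 2 P := hf.toLp f with hF
  set G : MeasureTheory.Lp ℝ 2 P := hg.toLp g with hG
  have hFae : ⇑F =ᵐ[P] f := MemLp.coeFn_toLp _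
  have hGae : ⇑G =ᵐ[P] g := MemLp.coeFn_toLp _
  have hGmem : G ∈ lpMeas ℝ ℝ m 2 P :=
    mem_lpMeas_iff_aestronglyMeasurable.mpr ⟨g, hgm, hGae⟩
  set Y : lpMeas ℝ ℝ m 2 P := condExpL2 ℝ ℝ hm F with hY
  have hYcond : (Y : Ω → ℝ) =ᵐ[P] P[f | m] := by
    refine ae_eq_condExp_of_forall_setIntegral_eq hm (hf.integrable one_le_two)
      (fun s₀ _ _ => (integrable_condExpL2_of_isFiniteMeasure hm).integrableOn)
      (fun s₀ hs₀ hμs₀ => ?_) (aestronglyMeasurable_condExpL2 hm F)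
    rw [integral_condExpL2_eq_of_fin_meas_real F hs₀ hμs₀.ne]
    exact setIntegral_congr_ae (hm _ hs₀) (hFae.mono fun ω h _ => h)
  have hLHS : (∫ ω, (f ω - (P[f | m]) ω) ^ 2 ∂P) = ‖F - (Y : MeasureTheory.Lp ℝ 2 P)‖ ^ 2 := by
    rw [← l2_int_sq P (F - (Y : MeasureTheory.Lp ℝ 2 P))]
    refine integral_congr_ae ?_
    filter_upwards [hFae, hYcond, MeasureTheory.Lp.coeFn_sub F (Y : MeasureTheory.Lp ℝ 2 P)]
      with ω h1 h2 h3
    rw [h3]; simp only [Pi.sub_apply, h1, h2]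
  have hmin : ‖F - (Y : MeasureTheory.Lp ℝ 2 P)‖ ≤ ‖F - G‖ := by
    have h1 : ‖F - (Y : MeasureTheory.Lp ℝ 2 P)‖ = ⨅ x : lpMeas ℝ ℝ m 2 P, ‖F - x‖ :=
      Submodule.starProjection_minimal (U := lpMeas ℝ ℝ m 2 P) F
    rw [h1]
    have hbdd : BddBelow
        (Set.range fun x : lpMeas ℝ ℝ m 2 P => ‖F - (x : MeasureTheory.Lp ℝ 2 P)‖) := by
      refine ⟨0, ?_⟩; rintro _ ⟨x, rfl⟩; exact norm_nonneg _
    exact ciInf_le hbdd (⟨G, hGmem⟩ : lpMeas ℝ ℝ m 2 P)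
  have hFG : ‖F - G‖ ^ 2 = ∫ ω, (f ω - g ω) ^ 2 ∂P := by
    rw [← l2_int_sq P (F - G)]
    refine integral_congr_ae ?_
    filter_upwards [hFae, hGae, MeasureTheory.Lp.coeFn_sub F G] with ω h1 h2 h3
    rw [h3]; simp only [Pi.sub_apply, h1, h2]
  rw [hLHS, ← hFG]
  exact pow_le_pow_left₀ (norm_nonneg _) hmin 2

/-- Failure of local nondeterminism with any exponent `2H − ε < 2H`: if `X` is a family of
square-integrable random variables and there is a sequence `s_i → t`, `s_i ≠ t`, with
`E[(X_t − X_{s_i})²] ≤ C|t − s_i|^{2H}`, then for every `n ≥ 1`, `ε ∈ (0,2H)`, `c > 0` and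
`r > 0` there are points `t_1, …, t_n ∈ B(t,r) \ {t}` with
`E[(X_t − E[X_t | σ(X_{t_1},…,X_{t_n})])²] ≤ c · min_k |t − t_k|^{2H−ε}`. -/
theorem stmt_12 {Ω : Type*} [MeasurableSpace Ω] (P : MeasureTheory.Measure Ω)
    [IsProbabilityMeasure P] (X : ℝ → Ω → ℝ)
    (hmeas : ∀ s : ℝ, Measurable (X s)) (hL2 : ∀ s : ℝ, MemLp (X s) 2 P)
    (t H C : ℝ) (hH : 0 < H) (hC : 0 < C)
    (s : ℕ → ℝ) (hne : ∀ i, s i ≠ t) (hlim : Tendsto s atTop (𝓝 t))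
    (hvar : ∀ i, (∫ ω, (X t ω - X (s i) ω) ^ 2 ∂P) ≤ C * |t - s i| ^ (2 * H)) :
    ∀ n : ℕ, 1 ≤ n → ∀ ε : ℝ, 0 < ε → ε < 2 * H → ∀ c > (0 : ℝ), ∀ r > (0 : ℝ),
      ∃ ts : Fin n → ℝ, (∀ k, ts k ∈ Metric.ball t r ∧ ts k ≠ t) ∧
        (∫ ω, (X t ω -
            (P[X t | ⨆ k : Fin n, MeasurableSpace.comap (X (ts k)) inferInstance]) ω) ^ 2 ∂P)
          ≤ c * ⨅ k : Fin n, |t - ts k| ^ (2 * H - ε) := by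
  intro n hn ε hε hεH c hc r hr
  haveI : Nonempty (Fin n) := Fin.pos_iff_nonempty.mp hn
  have hcC : (0 : ℝ) < c / C := div_pos hc hC
  have hδ : 0 < min r ((c / C) ^ (1 / ε)) := lt_min hr (Real.rpow_pos_of_pos hcC _)
  obtain ⟨N, hN⟩ := Metric.tendsto_atTop.mp hlim _ hδ
  have hdist : dist (s N) t < min r ((c / C) ^ (1 / ε)) := hN N le_rfl
  set u : ℝ := s N with hu
  set d : ℝ := |t - u| with hd
  have hd0 : 0 < d := by
    rw [hd, abs_pos, sub_ne_zero]
    exact fun h => hne N h.symm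
  have hdδ : d < min r ((c / C) ^ (1 / ε)) := by
    rw [hd, abs_sub_comm, ← Real.dist_eq]; exact hdist
  refine ⟨fun _ => u, fun k => ⟨?_, hne N⟩, ?_⟩
  · rw [Metric.mem_ball]; exact lt_of_lt_of_le hdist (min_le_left _ _)
  have hm : (⨆ k : Fin n, MeasurableSpace.comap (X ((fun _ => u) k)) inferInstance)
      ≤ ‹MeasurableSpace Ω› := iSup_le fun k => (hmeas u).comap_le
  have hXu_m : StronglyMeasurable[⨆ k : Fin n,
      MeasurableSpace.comap (X ((fun _ => u) k)) inferInstance] (X u) := by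
    refine Measurable.stronglyMeasurable ?_
    exact (measurable_iff_comap_le.mpr le_rfl).mono
      (le_iSup (fun _ : Fin n => MeasurableSpace.comap (X u) inferInstance)
        (Classical.arbitrary _)) le_rfl
  have hmain := condexp_L2_min hm P (hL2 t) (hL2 u) hXu_m
  have harith : C * d ^ (2 * H) ≤ c * d ^ (2 * H - ε) := by
    have hsplit : d ^ (2 * H) = d ^ ε * d ^ (2 * H - ε) := by
      rw [← Real.rpow_add hd0]; ring_nf
    have hdle : d ^ ε ≤ c / C := by
      have h1 : d ^ ε ≤ ((c / C) ^ (1 / ε)) ^ ε :=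
        Real.rpow_le_rpow hd0.le (le_of_lt (lt_of_lt_of_le hdδ (min_le_right _ _))) hε.le
      rwa [← Real.rpow_mul hcC.le, one_div_mul_cancel hε.ne', Real.rpow_one] at h1
    have hpos : (0 : ℝ) ≤ d ^ (2 * H - ε) := (Real.rpow_pos_of_pos hd0 _).le
    calc C * d ^ (2 * H) = C * d ^ ε * d ^ (2 * H - ε) := by rw [hsplit]; ring
      _ ≤ C * (c / C) * d ^ (2 * H - ε) := by
          have := mul_le_mul_of_nonneg_left hdle hC.le
          exact mul_le_mul_of_nonneg_right this hpos
      _ = c * d ^ (2 * H - ε) := by field_simp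
  rw [ciInf_const]
  exact hmain.trans ((hvar N).trans harith)
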